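/- Let T be a triangulated category and C ⊆ T a full additive subcategory closed under extensions with Hom(C, C[-n]) = 0 for all n > 0. Suppose for every morphism f : X → Y in C there exist exact triangles S --x--> X --f--> Y --y--> S[1] and S --c[-1]--> C'[-1] --θ--> K[1] --k[1]--> S[1] in T with K, C' ∈ C, such that x ∘ k : K → X is a kernel of f in C and c ∘ y : Y → C' is a cokernel of f in C. Then C, with the exact structure inherited from T, is an abelian category. -/

import Mathlib

/-!
STATEMENT 4: Let `T` be a triangulated category and `P` (the class of objects of) a full
additive subcategory closed under extensions with `Hom(P, P⟦-n⟧) = 0` for all `n > 0`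
(i.e. an admissible subcategory).  Suppose that for every morphism `f : X ⟶ Y` with
`X, Y ∈ P` there are exact triangles `S --x--> X --f--> Y --y--> S⟦1⟧` and
`S --c⟦-1⟧--> Q⟦-1⟧ --θ--> K⟦1⟧ --k⟦1⟧--> S⟦1⟧` with `K, Q ∈ P` such that `k ≫ x : K ⟶ X`
is a kernel of `f` in the subcategory and `y ≫ c : Y ⟶ Q` is a cokernel of `f` in the
subcategory.  Then the subcategory, with the exact structure inherited from `T`, is abelian.
-/

open CategoryTheory Category Limits Pretriangulated

theorem admissible_subcategory_abelian_of_kernels_cokernels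
    {C : Type*} [Category C] [Preadditive C] [HasZeroObject C] [HasShift C ℤ]
    [∀ n : ℤ, (shiftFunctor C n).Additive] [Pretriangulated C] [HasBinaryBiproducts C]
    (P : C → Prop)
    (hiso : ∀ {X Y : C}, (X ≅ Y) → P X → P Y)
    (hzero : ∀ X : C, IsZero X → P X)
    (hadd : ∀ {X Y : C}, P X → P Y → P (X ⊞ Y))
    (hext : ∀ T ∈ distTriang C, P T.obj₁ → P T.obj₃ → P T.obj₂)
    (hvanish : ∀ (X Y : C), P X → P Y → ∀ n : ℤ, n < 0 → ∀ f : X ⟶ Y⟦n⟧, f = 0)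
    (hkercoker : ∀ (X Y : C), P X → P Y → ∀ f : X ⟶ Y,
      ∃ (S K Q : C) (_ : P K) (_ : P Q)
        (x : S ⟶ X) (y : Y ⟶ S⟦(1 : ℤ)⟧) (k : K ⟶ S)
        (c : S⟦(1 : ℤ)⟧ ⟶ Q) (θ : Q⟦(-1 : ℤ)⟧ ⟶ K⟦(1 : ℤ)⟧),
        (Triangle.mk x f y ∈ distTriang C) ∧
        (Triangle.mk
            ((shiftFunctorCompIsoId C (1 : ℤ) (-1 : ℤ) (by omega)).inv.app S ≫
              (shiftFunctor C (-1 : ℤ)).map c)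
            θ ((shiftFunctor C (1 : ℤ)).map k) ∈ distTriang C) ∧
        -- `k ≫ x` is a kernel of `f` in the subcategory
        ((k ≫ x) ≫ f = 0 ∧
          ∀ (Z : C), P Z → ∀ g : Z ⟶ X, g ≫ f = 0 → ∃! u : Z ⟶ K, u ≫ (k ≫ x) = g) ∧
        -- `y ≫ c` is a cokernel of `f` in the subcategory
        (f ≫ (y ≫ c) = 0 ∧
          ∀ (Z : C), P Z → ∀ g : Y ⟶ Z, f ≫ g = 0 → ∃! u : Q ⟶ Z, (y ≫ c) ≫ u = g)) :
    Nonempty (Abelian (ObjectProperty.FullSubcategory P)) := by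
  classical
  have e11 : (1 : ℤ) + (-1) = 0 := by omega
  -- zero object
  haveI hZD : HasZeroObject (ObjectProperty.FullSubcategory P) := by
    obtain ⟨Z0, hZ0⟩ := HasZeroObject.zero (C := C)
    refine ⟨⟨Z0, hzero Z0 hZ0⟩, ?_⟩
    rw [IsZero.iff_id_eq_zero]
    exact ObjectProperty.hom_ext _ (hZ0.eq_of_src _ _)
  -- binary biproducts
  haveI hBB : HasBinaryBiproducts (ObjectProperty.FullSubcategory P) := by
    constructor
    intro X Y
    refine hasBinaryBiproduct_of_total
      { pt := ⟨X.obj ⊞ Y.obj, hadd X.property Y.property⟩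
        fst := ObjectProperty.homMk biprod.fst
        snd := ObjectProperty.homMk biprod.snd
        inl := ObjectProperty.homMk biprod.inl
        inr := ObjectProperty.homMk biprod.inr
        inl_fst := ObjectProperty.hom_ext _ biprod.inl_fst
        inl_snd := ObjectProperty.hom_ext _ biprod.inl_snd
        inr_fst := ObjectProperty.hom_ext _ biprod.inr_fst
        inr_snd := ObjectProperty.hom_ext _ biprod.inr_snd } ?_
    exact ObjectProperty.hom_ext _ biprod.total
  haveI hFP : HasFiniteProducts (ObjectProperty.FullSubcategory P) :=
    hasFiniteProducts_of_has_binary_and_terminal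
  -- kernels
  haveI hKerI : HasKernels (ObjectProperty.FullSubcategory P) := by
    constructor
    intro X Y f
    obtain ⟨S, K, Q, hK, hQ, x, y, k, c, θ, hT1, hT2, ⟨hk0, hku⟩, ⟨hc0, hcu⟩⟩ :=
      hkercoker X.obj Y.obj X.property Y.property f.hom
    let KD : ObjectProperty.FullSubcategory P := ⟨K, hK⟩
    let ι : KD ⟶ X := ObjectProperty.homMk (k ≫ x : K ⟶ X.obj)
    have hι : ι ≫ f = 0 := ObjectProperty.hom_ext _ hk0
    exact HasLimit.mk
      { cone := KernelFork.ofι ι hι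
        isLimit := KernelFork.IsLimit.ofι ι hι
          (fun {W'} g' hg' => ObjectProperty.homMk (hku W'.obj W'.property g'.hom (congrArg (·.hom) hg')).exists.choose)
          (fun {W'} g' hg' => ObjectProperty.hom_ext _ (hku W'.obj W'.property g'.hom (congrArg (·.hom) hg')).exists.choose_spec)
          (fun {W'} g' hg' m hm => ObjectProperty.hom_ext _
            ((hku W'.obj W'.property g'.hom (congrArg (·.hom) hg')).unique (congrArg (·.hom) hm)
              (hku W'.obj W'.property g'.hom (congrArg (·.hom) hg')).exists.choose_spec)) }
  -- cokernels
  haveI hCokerI : HasCokernels (ObjectProperty.FullSubcategory P) := by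
    constructor
    intro X Y f
    obtain ⟨S, K, Q, hK, hQ, x, y, k, c, θ, hT1, hT2, ⟨hk0, hku⟩, ⟨hc0, hcu⟩⟩ :=
      hkercoker X.obj Y.obj X.property Y.property f.hom
    let QD : ObjectProperty.FullSubcategory P := ⟨Q, hQ⟩
    let pr : Y ⟶ QD := ObjectProperty.homMk (y ≫ c : Y.obj ⟶ Q)
    have hpr : f ≫ pr = 0 := ObjectProperty.hom_ext _ hc0
    exact HasColimit.mk
      { cocone := CokernelCofork.ofπ pr hpr
        isColimit := CokernelCofork.IsColimit.ofπ pr hpr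
          (fun {Z'} g' hg' => ObjectProperty.homMk (hcu Z'.obj Z'.property g'.hom (congrArg (·.hom) hg')).exists.choose)
          (fun {Z'} g' hg' => ObjectProperty.hom_ext _ (hcu Z'.obj Z'.property g'.hom (congrArg (·.hom) hg')).exists.choose_spec)
          (fun {Z'} g' hg' m hm => ObjectProperty.hom_ext _
            ((hcu Z'.obj Z'.property g'.hom (congrArg (·.hom) hg')).unique (congrArg (·.hom) hm)
              (hcu Z'.obj Z'.property g'.hom (congrArg (·.hom) hg')).exists.choose_spec)) }
  -- normal monomorphisms
  haveI hNM : IsNormalMonoCategory (ObjectProperty.FullSubcategory P) := by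
    constructor
    intro X Y f hf
    have : Nonempty (NormalMono f) := by
      obtain ⟨S, K, Q, hK, hQ, x, y, k, c, θ, hT1, hT2, ⟨hk0, hku⟩, ⟨hc0, hcu⟩⟩ :=
        hkercoker X.obj Y.obj X.property Y.property f.hom
      -- the kernel of `f` vanishes since `f` is a monomorphism
      have hstep : (k ≫ x) ≫ f.hom = (0 : K ⟶ X.obj) ≫ f.hom := by rw [hk0, zero_comp]
      have hkx : k ≫ x = (0 : K ⟶ X.obj) :=
        congrArg (·.hom) (hf.right_cancellation (Z := ⟨K, hK⟩) (ObjectProperty.homMk (k ≫ x)) 0 (ObjectProperty.hom_ext _ hstep))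
      have hKz : IsZero K := by
        rw [IsZero.iff_id_eq_zero]
        refine (hku K hK 0 (by rw [zero_comp])).unique ?_ ?_
        · rw [id_comp]
          exact hkx
        · rw [zero_comp]
      have hK1z : IsZero (K⟦(1 : ℤ)⟧) := (shiftFunctor C (1 : ℤ)).map_isZero hKz
      haveI hmor1 : IsIso ((shiftFunctorCompIsoId C (1 : ℤ) (-1 : ℤ) e11).inv.app S ≫
          (shiftFunctor C (-1 : ℤ)).map c) :=
        (Triangle.isZero₃_iff_isIso₁ _ hT2).1 hK1z
      haveI : IsIso ((shiftFunctor C (-1 : ℤ)).map c) := IsIso.of_isIso_comp_left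
        ((shiftFunctorCompIsoId C (1 : ℤ) (-1 : ℤ) e11).inv.app S) _
      haveI hic : IsIso c := isIso_of_reflects_iso c (shiftFunctor C (-1 : ℤ))
      -- `f` is the kernel of `y ≫ c`
      have key : ∀ (Zc : C), P Zc → ∀ g' : Zc ⟶ Y.obj, g' ≫ (y ≫ c) = 0 →
          ∃ a : Zc ⟶ X.obj, g' = a ≫ f.hom := by
        intro Zc hZc g' hg'
        have hy : (g' ≫ y) ≫ c = 0 ≫ c := by
          rw [zero_comp, Category.assoc]
          exact hg'
        exact Triangle.coyoneda_exact₃ _ hT1 g' ((cancel_mono c).1 hy)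
      let QD : ObjectProperty.FullSubcategory P := ⟨Q, hQ⟩
      let pr : Y ⟶ QD := ObjectProperty.homMk (y ≫ c : Y.obj ⟶ Q)
      have hpr : f ≫ pr = 0 := ObjectProperty.hom_ext _ hc0
      refine ⟨{
        Z := QD
        g := pr
        w := hpr
        isLimit := KernelFork.IsLimit.ofι f hpr
          (fun {W'} g' hg' => ObjectProperty.homMk (key W'.obj W'.property g'.hom (congrArg (·.hom) hg')).choose)
          (fun {W'} g' hg' => ObjectProperty.hom_ext _ (key W'.obj W'.property g'.hom (congrArg (·.hom) hg')).choose_spec.symm)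
          (fun {W'} g' hg' m hm => ?_) }⟩
      have hb : g'.hom = (key W'.obj W'.property g'.hom (congrArg (·.hom) hg')).choose ≫ f.hom :=
        (key W'.obj W'.property g'.hom (congrArg (·.hom) hg')).choose_spec
      set a := (key W'.obj W'.property g'.hom (congrArg (·.hom) hg')).choose with hadef
      let mc : W'.obj ⟶ X.obj := m.hom
      have hm' : mc ≫ f.hom = g'.hom := congrArg (·.hom) hm
      have h0 : (mc - a) ≫ f.hom = 0 := by
        rw [Preadditive.sub_comp, hm', sub_eq_zero]
        exact hb
      obtain ⟨v, hv⟩ := Triangle.coyoneda_exact₂ _ hT1 (mc - a) h0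
      have hv0 : v ≫ ((shiftFunctorCompIsoId C (1 : ℤ) (-1 : ℤ) e11).inv.app S ≫
          (shiftFunctor C (-1 : ℤ)).map c) = 0 :=
        hvanish W'.obj Q W'.property hQ (-1) (by omega) _
      have hveq : v = 0 := by
        exact (cancel_mono ((shiftFunctorCompIsoId C (1 : ℤ) (-1 : ℤ) e11).inv.app S ≫
          (shiftFunctor C (-1 : ℤ)).map c)).1 (hv0.trans zero_comp.symm)
      have hma : mc - a = 0 := by
        rw [hv, hveq, zero_comp]
        rfl
      exact ObjectProperty.hom_ext _ (sub_eq_zero.mp hma)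
    exact this
  -- normal epimorphisms
  haveI hNE : IsNormalEpiCategory (ObjectProperty.FullSubcategory P) := by
    constructor
    intro X Y f hf
    have : Nonempty (NormalEpi f) := by
      obtain ⟨S, K, Q, hK, hQ, x, y, k, c, θ, hT1, hT2, ⟨hk0, hku⟩, ⟨hc0, hcu⟩⟩ :=
        hkercoker X.obj Y.obj X.property Y.property f.hom
      -- the cokernel of `f` vanishes since `f` is an epimorphism
      let QD0 : ObjectProperty.FullSubcategory P := ⟨Q, hQ⟩
      let pr0 : Y ⟶ QD0 := ObjectProperty.homMk (y ≫ c : Y.obj ⟶ Q)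
      have hyc' : pr0 = 0 := by
        apply hf.left_cancellation
        rw [comp_zero]
        exact ObjectProperty.hom_ext _ hc0
      have hyc : y ≫ c = (0 : Y.obj ⟶ Q) := congrArg (·.hom) hyc'
      have hQz : IsZero Q := by
        rw [IsZero.iff_id_eq_zero]
        refine (hcu Q hQ 0 (by rw [comp_zero])).unique ?_ ?_
        · rw [comp_id]
          exact hyc
        · rw [comp_zero]
      have hQ1z : IsZero (Q⟦(-1 : ℤ)⟧) := (shiftFunctor C (-1 : ℤ)).map_isZero hQz
      haveI hmor3 : IsIso ((shiftFunctor C (1 : ℤ)).map k) :=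
        (Triangle.isZero₂_iff_isIso₃ _ hT2).1 hQ1z
      haveI hik : IsIso k := isIso_of_reflects_iso k (shiftFunctor C (1 : ℤ))
      -- `f` is the cokernel of `k ≫ x`
      let fc : X.obj ⟶ Y.obj := f.hom
      have key : ∀ (Zc : C), P Zc → ∀ g' : X.obj ⟶ Zc, (k ≫ x) ≫ g' = 0 →
          ∃ b : Y.obj ⟶ Zc, g' = fc ≫ b := by
        intro Zc hZc g' hg'
        have hx1 : k ≫ x ≫ g' = k ≫ 0 := by
          rw [comp_zero, ← Category.assoc]
          exact hg'
        exact Triangle.yoneda_exact₂ _ hT1 g' ((cancel_epi k).1 hx1)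
      let KD : ObjectProperty.FullSubcategory P := ⟨K, hK⟩
      let ι : KD ⟶ X := ObjectProperty.homMk (k ≫ x : K ⟶ X.obj)
      have hι : ι ≫ f = 0 := ObjectProperty.hom_ext _ hk0
      refine ⟨{
        W := KD
        g := ι
        w := hι
        isColimit := CokernelCofork.IsColimit.ofπ f hι
          (fun {Z'} g' hg' => ObjectProperty.homMk (key Z'.obj Z'.property g'.hom (congrArg (·.hom) hg')).choose)
          (fun {Z'} g' hg' => ObjectProperty.hom_ext _ (key Z'.obj Z'.property g'.hom (congrArg (·.hom) hg')).choose_spec.symm)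
          (fun {Z'} g' hg' m hm => ?_) }⟩
      have hb : g'.hom = fc ≫ (key Z'.obj Z'.property g'.hom (congrArg (·.hom) hg')).choose :=
        (key Z'.obj Z'.property g'.hom (congrArg (·.hom) hg')).choose_spec
      set b := (key Z'.obj Z'.property g'.hom (congrArg (·.hom) hg')).choose with hbdef
      let mc : Y.obj ⟶ Z'.obj := m.hom
      have hm' : fc ≫ mc = g'.hom := congrArg (·.hom) hm
      have h0 : fc ≫ (mc - b) = 0 := by
        rw [Preadditive.comp_sub, hm', sub_eq_zero]
        exact hb
      obtain ⟨w, hw⟩ := Triangle.yoneda_exact₃ _ hT1 (mc - b) h0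
      have h1 : (shiftFunctor C (1 : ℤ)).map k ≫ w = 0 := by
        have h2 : (shiftFunctorCompIsoId C (1 : ℤ) (-1 : ℤ) e11).inv.app K ≫
            (shiftFunctor C (-1 : ℤ)).map ((shiftFunctor C (1 : ℤ)).map k ≫ w) = 0 :=
          hvanish K Z'.obj hK Z'.property (-1) (by omega) _
        have h3 : (shiftFunctor C (-1 : ℤ)).map ((shiftFunctor C (1 : ℤ)).map k ≫ w) = 0 := by
          rw [← cancel_epi ((shiftFunctorCompIsoId C (1 : ℤ) (-1 : ℤ) e11).inv.app K),
            comp_zero]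
          exact h2
        exact (shiftFunctor C (-1 : ℤ)).map_injective
          (h3.trans (Functor.map_zero _ _ _).symm)
      have hweq : w = 0 := by
        exact (cancel_epi ((shiftFunctor C (1 : ℤ)).map k)).1 (h1.trans comp_zero.symm)
      have hmb : mc - b = 0 := by
        rw [hw, hweq, comp_zero]
        rfl
      exact ObjectProperty.hom_ext _ (sub_eq_zero.mp hmb)
    exact this
  exact ⟨{
    toPreadditive := inferInstance
    toIsNormalMonoCategory := inferInstance
    toIsNormalEpiCategory := inferInstance }⟩
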